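/- arXiv:2011.00151 — 6 statements merged into one kernel-verified Lean document; each statement's English description precedes it below -/
import Mathlib

section
/- Let V be a finite-dimensional vector space over F_2 and let E ⊆ V \ {0}. Then E is affine (there exists a linear functional f : V → F_2 with f(e) = 1 for all e ∈ E) if and only if E contains no induced odd circuit, i.e., there is no odd n ≥ 3 and no set {x_1, ..., x_n} of n distinct vectors with x_1 + ... + x_n = 0, every proper subset of {x_1,...,x_n} linearly independent, and E ∩ span{x_1,...,x_n} = {x_1, ..., x_n}. -/
open Submodule

private lemma zmod2_eq_one : ∀ a : ZMod 2, a ≠ 0 → a = 1 := by decide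

private lemma zmod2_cast_eq_one_iff (n : ℕ) : ((n : ZMod 2) = 1) ↔ Odd n := by
  rw [Nat.odd_iff]
  have h : ((n % 2 : ℕ) : ZMod 2) = (n : ZMod 2) := ZMod.natCast_mod n 2
  have h2 : n % 2 = 0 ∨ n % 2 = 1 := by omega
  rcases h2 with h2 | h2 <;> rw [← h, h2] <;> simp

private lemma char2_add_self {V : Type*} [AddCommGroup V] [Module (ZMod 2) V] (y : V) :
    y + y = 0 := by
  have : y + y = ((1 : ZMod 2) + 1) • y := by rw [add_smul, one_smul]
  rw [this, show ((1 : ZMod 2) + 1) = 0 from by decide, zero_smul]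

private lemma char2_eq_of_add_eq_zero {V : Type*} [AddCommGroup V] [Module (ZMod 2) V]
    {x y : V} (h : x + y = 0) : x = y := by
  have := congrArg (· + y) h
  simp only [zero_add, add_assoc, char2_add_self, add_zero] at this
  exact this

private lemma exists_finset_of_mem_span {V : Type*} [AddCommGroup V] [Module (ZMod 2) V]
    {s : Set V} {x : V} (hx : x ∈ span (ZMod 2) s) :
    ∃ A : Finset V, ↑A ⊆ s ∧ ∑ y ∈ A, y = x := by
  obtain ⟨c, hsup, hsum⟩ := mem_span_set.mp hx
  refine ⟨c.support, hsup, ?_⟩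
  rw [← hsum, Finsupp.sum]
  refine Finset.sum_congr rfl fun i hi => ?_
  rw [zmod2_eq_one _ (Finsupp.mem_support_iff.mp hi), one_smul]

/-- If there is no functional equal to 1 on E, then E has an odd zero-sum subset. -/
private lemma exists_odd_zero_sum {V : Type*} [AddCommGroup V] [Module (ZMod 2) V]
    (E : Set V) (hnof : ¬ ∃ f : V →ₗ[ZMod 2] ZMod 2, ∀ e ∈ E, f e = 1) :
    ∃ A : Finset V, ↑A ⊆ E ∧ Odd A.card ∧ ∑ x ∈ A, x = 0 := by
  classical
  set D : Set (V × ZMod 2) := (fun v => (v, (1 : ZMod 2))) '' E with hD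
  by_cases hmem : ((0, 1) : V × ZMod 2) ∈ span (ZMod 2) D
  · obtain ⟨c, hsup, hsum⟩ := mem_span_set.mp hmem
    have hsupp1 : ∀ p ∈ c.support, p.2 = (1 : ZMod 2) := by
      intro p hp
      obtain ⟨e, _, he⟩ := hsup hp
      rw [← he]
    have hinj : ∀ p ∈ c.support, ∀ q ∈ c.support, p.1 = q.1 → p = q := by
      intro p hp q hq h1
      exact Prod.ext h1 (by rw [hsupp1 p hp, hsupp1 q hq])
    refine ⟨c.support.image Prod.fst, ?_, ?_, ?_⟩
    · intro x hx
      obtain ⟨p, hp, hpx⟩ := Finset.mem_image.mp (by exact_mod_cast hx)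
      obtain ⟨e, heE, he⟩ := hsup hp
      rw [← hpx, ← he]; exact heE
    · have hcard : (c.support.image Prod.fst).card = c.support.card :=
        Finset.card_image_of_injOn hinj
      rw [hcard]
      have hsum2 : (∑ p ∈ c.support, c p • p).2 = (1 : ZMod 2) := by
        rw [show (∑ p ∈ c.support, c p • p) = c.sum fun mi r => r • mi from rfl, hsum]
      rw [Prod.snd_sum] at hsum2
      have : ∀ p ∈ c.support, (c p • p).2 = (1 : ZMod 2) := by
        intro p hp
        have h1 : c p = 1 := zmod2_eq_one _ (Finsupp.mem_support_iff.mp hp)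
        simp [h1, hsupp1 p hp]
      rw [Finset.sum_congr rfl this, Finset.sum_const, nsmul_eq_mul, mul_one] at hsum2
      exact (zmod2_cast_eq_one_iff _).mp hsum2
    · have hsum1 : (∑ p ∈ c.support, c p • p).1 = (0 : V) := by
        rw [show (∑ p ∈ c.support, c p • p) = c.sum fun mi r => r • mi from rfl, hsum]
      rw [Prod.fst_sum] at hsum1
      rw [Finset.sum_image hinj]
      rw [← hsum1]
      refine Finset.sum_congr rfl fun p hp => ?_
      rw [zmod2_eq_one _ (Finsupp.mem_support_iff.mp hp), one_smul]
  · exfalso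
    obtain ⟨φ, hφ1, hφ2⟩ :=
      Submodule.exists_dual_map_eq_bot_of_notMem hmem inferInstance
    apply hnof
    refine ⟨φ.comp (LinearMap.inl (ZMod 2) V (ZMod 2)), fun e heE => ?_⟩
    have hφ0 : ∀ u ∈ span (ZMod 2) D, φ u = 0 := by
      intro u hu
      have : φ u ∈ (span (ZMod 2) D).map φ := Submodule.mem_map_of_mem hu
      rw [hφ2] at this
      exact this
    have he1 : φ (e, 1) = 0 := hφ0 _ (subset_span ⟨e, heE, rfl⟩)
    have h01 : φ ((0 : V), (1 : ZMod 2)) = 1 := zmod2_eq_one _ hφ1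
    have hsplit : ((e, (0 : ZMod 2)) : V × ZMod 2) = (e, 1) + (0, 1) := by
      rw [Prod.mk_add_mk, add_zero, show (1 : ZMod 2) + 1 = 0 from by decide]
    simp only [LinearMap.comp_apply, LinearMap.inl_apply]
    rw [hsplit, map_add, he1, h01, zero_add]

theorem stmt2 {V : Type*} [AddCommGroup V] [Module (ZMod 2) V]
    [FiniteDimensional (ZMod 2) V] (E : Set V) (h0 : (0 : V) ∉ E) :
    (∃ f : V →ₗ[ZMod 2] ZMod 2, ∀ e ∈ E, f e = 1) ↔
      ¬ ∃ (n : ℕ) (S : Finset V), Odd n ∧ 3 ≤ n ∧ S.card = n ∧ (∑ x ∈ S, x) = 0 ∧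
        (∀ T : Finset V, T ⊂ S →
          LinearIndependent (ZMod 2) (Subtype.val : ↥(T : Set V) → V)) ∧
        E ∩ (span (ZMod 2) (S : Set V) : Set V) = (S : Set V) := by
  classical
  constructor
  · rintro ⟨f, hf⟩ ⟨n, S, hodd, h3, hcard, hsum, _, hspan⟩
    have hSE : ∀ x ∈ S, x ∈ E := by
      intro x hx
      have hx' : x ∈ E ∩ (span (ZMod 2) (S : Set V) : Set V) := by
        rw [hspan]; exact_mod_cast hx
      exact hx'.1
    have h1 : f (∑ x ∈ S, x) = 0 := by rw [hsum]; simp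
    rw [map_sum] at h1
    rw [Finset.sum_congr rfl (fun x hx => hf x (hSE x hx))] at h1
    rw [Finset.sum_const, nsmul_eq_mul, mul_one, hcard] at h1
    have := (zmod2_cast_eq_one_iff n).mpr hodd
    rw [this] at h1
    exact one_ne_zero h1
  · intro hno
    by_contra hnof
    obtain ⟨A0, hA0E, hA0odd, hA0sum⟩ := exists_odd_zero_sum E hnof
    set P : ℕ → Prop := fun m => ∃ A : Finset V, ↑A ⊆ E ∧ A.card = m ∧ Odd m ∧ ∑ x ∈ A, x = 0
      with hP
    have hPex : ∃ m, P m := ⟨A0.card, A0, hA0E, rfl, hA0odd, hA0sum⟩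
    set n := Nat.find hPex with hn
    obtain ⟨S, hSE, hScard, hSodd, hSsum⟩ := Nat.find_spec hPex
    rw [← hn] at hScard hSodd
    have hmin : ∀ m, m < n → ¬ P m := fun m hm => Nat.find_min hPex hm
    -- n ≥ 3
    have hn1 : n ≠ 1 := by
      intro h1
      obtain ⟨a, ha⟩ := Finset.card_eq_one.mp (hScard.trans h1)
      rw [ha, Finset.sum_singleton] at hSsum
      apply h0
      rw [← hSsum]
      exact hSE (by rw [ha]; exact Finset.mem_singleton_self a)
    have h3 : 3 ≤ n := by
      rcases hSodd with ⟨k, hk⟩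
      omega
    -- linear independence of proper subsets
    have hindep : ∀ T : Finset V, T ⊂ S →
        LinearIndependent (ZMod 2) (Subtype.val : ↥((T : Finset V) : Set V) → V) := by
      intro T hT
      apply (linearIndependent_subtype_iff.trans linearIndepOn_iff).mpr
      intro l hl hl0
      by_contra hlne
      have hsupne : l.support.Nonempty := Finsupp.support_nonempty_iff.mpr hlne
      have hsub : l.support ⊆ T := by
        intro i hi
        exact_mod_cast hl (by exact_mod_cast hi)
      have hsubS : l.support ⊆ S := hsub.trans hT.subset
      have hsumB : ∑ x ∈ l.support, x = 0 := by
        rw [Finsupp.linearCombination_apply, Finsupp.sum] at hl0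
        rw [← hl0]
        refine Finset.sum_congr rfl fun i hi => ?_
        rw [zmod2_eq_one _ (Finsupp.mem_support_iff.mp hi), one_smul, id]
      have hcardlt : l.support.card < n := by
        rw [← hScard]
        exact lt_of_le_of_lt (Finset.card_le_card hsub) (Finset.card_lt_card hT)
      rcases Nat.even_or_odd l.support.card with hev | hod
      · -- use S \ support
        have hsum' : (∑ x ∈ S \ l.support, x) + ∑ x ∈ l.support, x = ∑ x ∈ S, x :=
          Finset.sum_sdiff hsubS
        rw [hSsum, hsumB, add_zero] at hsum'
        have hclt : (S \ l.support).card < n := by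
          rw [Finset.card_sdiff_of_subset hsubS, hScard]
          have := hsupne.card_pos
          omega
        refine hmin _ hclt ⟨S \ l.support, ?_, rfl, ?_, hsum'⟩
        · intro x hx
          exact hSE (Finset.mem_coe.mpr (Finset.mem_sdiff.mp (Finset.mem_coe.mp hx)).1)
        · rw [Finset.card_sdiff_of_subset hsubS, hScard]
          refine Nat.Odd.sub_even ?_ hSodd hev
          rw [← hScard]
          exact Finset.card_le_card hsubS
      · refine hmin _ hcardlt ⟨l.support, ?_, rfl, hod, hsumB⟩
        intro x hx
        exact hSE (Finset.mem_coe.mpr (hsubS (Finset.mem_coe.mp hx)))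
    -- induced condition
    have hinduced : E ∩ (span (ZMod 2) ((S : Finset V) : Set V) : Set V) = (S : Set V) := by
      apply Set.Subset.antisymm
      · rintro y ⟨hyE, hyspan⟩
        by_contra hyS
        obtain ⟨A, hAS, hAsum⟩ := exists_finset_of_mem_span hyspan
        have hASf : A ⊆ S := Finset.coe_subset.mp hAS
        have hyA : y ∉ A := fun h => hyS (hAS h)
        have hAcard : A.card ≤ n := by rw [← hScard]; exact Finset.card_le_card hASf
        have hAne : A.card ≠ n := by
          intro h
          have : A = S := Finset.eq_of_subset_of_card_le hASf (by omega)
          rw [this, hSsum] at hAsum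
          exact h0 (hAsum ▸ hyE)
        rcases Nat.even_or_odd A.card with hev | hod
        · -- even case
          by_cases hA1 : A.card = n - 1
          · -- then y ∈ S, contradiction
            have hsd1 : (S \ A).card = 1 := by
              rw [Finset.card_sdiff_of_subset hASf, hScard, hA1]; omega
            obtain ⟨s, hs⟩ := Finset.card_eq_one.mp hsd1
            have hsum' : (∑ x ∈ S \ A, x) + ∑ x ∈ A, x = ∑ x ∈ S, x :=
              Finset.sum_sdiff hASf
            rw [hSsum, hs, Finset.sum_singleton, hAsum] at hsum'
            have hsy : s = y := char2_eq_of_add_eq_zero hsum'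
            apply hyS
            have hsS : s ∈ S \ A := by rw [hs]; exact Finset.mem_singleton_self s
            rw [← hsy]
            exact_mod_cast (Finset.mem_sdiff.mp hsS).1
          · have hlt : A.card + 1 < n := by
              rcases hSodd with ⟨k, hk⟩
              rcases hev with ⟨j, hj⟩
              omega
            refine hmin _ hlt ⟨insert y A, ?_, ?_, ?_, ?_⟩
            · intro x hx
              rcases Finset.mem_insert.mp (by exact_mod_cast hx) with h | h
              · rw [h]; exact hyE
              · exact hSE (Finset.mem_coe.mpr (hASf h))
            · rw [Finset.card_insert_of_notMem hyA]
            · exact Even.add_one hev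
            · rw [Finset.sum_insert hyA, hAsum, char2_add_self]
        · -- odd case
          by_cases hA1 : A.card = 1
          · obtain ⟨a, ha⟩ := Finset.card_eq_one.mp hA1
            rw [ha, Finset.sum_singleton] at hAsum
            apply hyS
            rw [← hAsum]
            exact_mod_cast hASf (by rw [ha]; exact Finset.mem_singleton_self a)
          · have hA3 : 3 ≤ A.card := by
              rcases hod with ⟨k, hk⟩
              omega
            have hySA : y ∉ S \ A := fun h => hyS ((Finset.mem_sdiff.mp h).1)
            have hsum' : (∑ x ∈ S \ A, x) + ∑ x ∈ A, x = ∑ x ∈ S, x :=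
              Finset.sum_sdiff hASf
            rw [hSsum, hAsum] at hsum'
            have hsdsum : ∑ x ∈ S \ A, x = y := char2_eq_of_add_eq_zero hsum'
            have hlt : (S \ A).card + 1 < n := by
              rw [Finset.card_sdiff_of_subset hASf, hScard]
              omega
            refine hmin _ hlt ⟨insert y (S \ A), ?_, ?_, ?_, ?_⟩
            · intro x hx
              rcases Finset.mem_insert.mp (by exact_mod_cast hx) with h | h
              · rw [h]; exact hyE
              · exact hSE (Finset.mem_coe.mpr (Finset.mem_sdiff.mp h).1)
            · rw [Finset.card_insert_of_notMem hySA]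
            · rw [Finset.card_sdiff_of_subset hASf, hScard]
              have : Even (n - A.card) := Nat.Odd.sub_odd hSodd hod
              exact this.add_one
            · rw [Finset.sum_insert hySA, hsdsum, char2_add_self]
      · intro x hx
        exact ⟨hSE hx, subset_span hx⟩
    exact hno ⟨n, S, hSodd, h3, hScard, hSsum, hindep, hinduced⟩
end

section
/- Let E_1, E_2, E_3 be three sets of edges of the complete graph K_5 whose union is all of E(K_5), such that no E_i contains two vertex-disjoint edges. Then some E_i contains the three edges of a triangle. -/
private lemma star_of_no_triangle (E : Set (Sym2 (Fin 5)))
    (hd : ∀ e ∈ E, ¬ e.IsDiag)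
    (hs : ∀ e ∈ E, ∀ f ∈ E, ∃ v, v ∈ e ∧ v ∈ f)
    (hnt : ¬ ∃ a b c : Fin 5, a ≠ b ∧ a ≠ c ∧ b ≠ c ∧
      s(a, b) ∈ E ∧ s(b, c) ∈ E ∧ s(a, c) ∈ E) :
    ∃ v, ∀ e ∈ E, v ∈ e := by
  by_cases hne : ∃ e, e ∈ E
  · obtain ⟨e, he⟩ := hne
    induction e using Sym2.inductionOn with
    | hf a b =>
      have hab : a ≠ b := by
        have := hd _ he; simpa [Sym2.isDiag_iff_proj_eq] using this
      by_cases hA : ∀ f ∈ E, a ∈ f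
      · exact ⟨a, hA⟩
      by_cases hB : ∀ g ∈ E, b ∈ g
      · exact ⟨b, hB⟩
      push_neg at hA hB
      obtain ⟨f, hf, haf⟩ := hA
      obtain ⟨g, hg, hbg⟩ := hB
      -- b ∈ f
      have hbf : b ∈ f := by
        obtain ⟨v, hv1, hv2⟩ := hs _ he _ hf
        rw [Sym2.mem_iff] at hv1
        rcases hv1 with rfl | rfl
        · exact absurd hv2 haf
        · exact hv2
      -- a ∈ g
      have hag : a ∈ g := by
        obtain ⟨v, hv1, hv2⟩ := hs _ he _ hg
        rw [Sym2.mem_iff] at hv1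
        rcases hv1 with rfl | rfl
        · exact hv2
        · exact absurd hv2 hbg
      obtain ⟨c, rfl⟩ := (Sym2.mem_iff_exists.mp hbf)
      obtain ⟨d, rfl⟩ := (Sym2.mem_iff_exists.mp hag)
      -- f, g share a vertex, which must be c = d
      have hcd : c = d := by
        obtain ⟨w, hw1, hw2⟩ := hs _ hf _ hg
        rw [Sym2.mem_iff] at hw1 hw2
        rcases hw1 with rfl | rfl
        · exact absurd hg (by simpa using fun h => hbg (by rw [Sym2.mem_iff]; tauto))
        · rcases hw2 with rfl | rfl
          · exact absurd hf (fun _ => haf (by rw [Sym2.mem_iff]; tauto))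
          · rfl
      subst hcd
      exfalso
      apply hnt
      refine ⟨a, b, c, hab, ?_, ?_, he, hf, hg⟩
      · rintro rfl; exact haf (Sym2.mem_mk_right _ _)
      · rintro rfl; exact hbg (Sym2.mem_mk_right _ _)
  · exact ⟨0, fun e he => absurd ⟨e, he⟩ hne⟩

private lemma two_outside : ∀ x y z : Fin 5, ∃ d e : Fin 5, d ≠ e ∧
    d ≠ x ∧ d ≠ y ∧ d ≠ z ∧ e ≠ x ∧ e ≠ y ∧ e ≠ z := by decide

theorem stmt5 (Es : Fin 3 → Set (Sym2 (Fin 5)))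
    (hdiag : ∀ i, ∀ e ∈ Es i, ¬ e.IsDiag)
    (hcov : ∀ e : Sym2 (Fin 5), ¬ e.IsDiag → ∃ i, e ∈ Es i)
    (hshare : ∀ i, ∀ e ∈ Es i, ∀ f ∈ Es i, ∃ v, v ∈ e ∧ v ∈ f) :
    ∃ i, ∃ a b c : Fin 5, a ≠ b ∧ a ≠ c ∧ b ≠ c ∧
      s(a, b) ∈ Es i ∧ s(b, c) ∈ Es i ∧ s(a, c) ∈ Es i := by
  by_contra h
  have hnt : ∀ i, ¬ ∃ a b c : Fin 5, a ≠ b ∧ a ≠ c ∧ b ≠ c ∧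
      s(a, b) ∈ Es i ∧ s(b, c) ∈ Es i ∧ s(a, c) ∈ Es i :=
    fun i hi => h ⟨i, hi⟩
  have hstar : ∀ i, ∃ v, ∀ e ∈ Es i, v ∈ e :=
    fun i => star_of_no_triangle (Es i) (hdiag i) (hshare i) (hnt i)
  choose v hv using hstar
  obtain ⟨d, e, hde, h0, h1, h2, h0', h1', h2'⟩ := two_outside (v 0) (v 1) (v 2)
  have hnd : ¬ (s(d, e)).IsDiag := by simpa [Sym2.isDiag_iff_proj_eq] using hde
  obtain ⟨i, hi⟩ := hcov _ hnd
  have := hv i _ hi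
  rw [Sym2.mem_iff] at this
  fin_cases i <;> rcases this with rfl | rfl <;> simp_all
end

section
/- Let V be a finite-dimensional vector space over F_2 and write G = V \ {0}. Let (P, Q, R) be a partition of G such that no triangle T = {a, b, a+b} ⊆ G satisfies both |T ∩ P| ≥ 1 and |T ∩ R| = 1. Then, letting S = span(P), we have S \ {0} ⊆ P ∪ Q, and every coset x + S of S in V with x ∉ S is entirely contained in Q or entirely contained in R. -/
open Submodule

theorem stmt7 {V : Type*} [AddCommGroup V] [Module (ZMod 2) V]
    [FiniteDimensional (ZMod 2) V] (P Q R : Set V)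
    (hunion : P ∪ Q ∪ R = {v : V | v ≠ 0})
    (hPQ : Disjoint P Q) (hPR : Disjoint P R) (hQR : Disjoint Q R)
    (htri : ∀ a b : V, a ≠ 0 → b ≠ 0 → a ≠ b →
      ¬ (((({a, b, a + b} : Set V)) ∩ P).Nonempty ∧
          ((({a, b, a + b} : Set V)) ∩ R).ncard = 1)) :
    ((span (ZMod 2) P : Set V) \ {0} ⊆ P ∪ Q) ∧
    ∀ x : V, x ∉ span (ZMod 2) P →
      ((x + ·) '' (span (ZMod 2) P : Set V) ⊆ Q ∨
        (x + ·) '' (span (ZMod 2) P : Set V) ⊆ R) := by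
  have hne : ∀ v : V, v ∈ P ∪ Q ∪ R → v ≠ 0 := by
    intro v hv
    rw [hunion] at hv; exact hv
  have hchar : ∀ v : V, v + v = 0 := by
    intro v
    have h1 : (2 : ZMod 2) • v = v + v := two_smul _ v
    have h2 : (2 : ZMod 2) = 0 := by decide
    rw [h2, zero_smul] at h1; exact h1.symm
  -- key lemma 1: if a ∈ P, b ∉ R then a + b ∉ R
  have key1 : ∀ a b : V, a ∈ P → b ≠ 0 → a ≠ b → b ∉ R → a + b ∈ R → False := by
    intro a b haP hb hab hbR habR
    have haR : a ∉ R := Set.disjoint_left.mp hPR haP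
    have ha0 : a ≠ 0 := hne a (Or.inl (Or.inl haP))
    refine htri a b ha0 hb hab ⟨⟨a, by simp, haP⟩, ?_⟩
    have hset : ({a, b, a + b} : Set V) ∩ R = {a + b} := by
      ext x
      simp only [Set.mem_inter_iff, Set.mem_insert_iff, Set.mem_singleton_iff]
      constructor
      · rintro ⟨h1 | h1 | h1, h2⟩
        · exact absurd (h1 ▸ h2) haR
        · exact absurd (h1 ▸ h2) hbR
        · exact h1
      · rintro rfl; exact ⟨Or.inr (Or.inr rfl), habR⟩
    rw [hset, Set.ncard_singleton]
  -- key lemma 2: if a ∈ P, b ∈ R then a + b ∈ R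
  have key2 : ∀ a b : V, a ∈ P → b ∈ R → a ≠ b → a + b ∈ R := by
    intro a b haP hbR hab
    by_contra habR
    have haR : a ∉ R := Set.disjoint_left.mp hPR haP
    have ha0 : a ≠ 0 := hne a (Or.inl (Or.inl haP))
    have hb0 : b ≠ 0 := hne b (Or.inr hbR)
    refine htri a b ha0 hb0 hab ⟨⟨a, by simp, haP⟩, ?_⟩
    have hset : ({a, b, a + b} : Set V) ∩ R = {b} := by
      ext x
      simp only [Set.mem_inter_iff, Set.mem_insert_iff, Set.mem_singleton_iff]
      constructor
      · rintro ⟨h1 | h1 | h1, h2⟩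
        · exact absurd (h1 ▸ h2) haR
        · exact h1
        · exact absurd (h1 ▸ h2) habR
      · rintro rfl; exact ⟨Or.inr (Or.inl rfl), hbR⟩
    rw [hset, Set.ncard_singleton]
  -- every element of the span is a sum of a list of elements of P
  have hlist : ∀ v ∈ span (ZMod 2) P, ∃ l : List V, (∀ p ∈ l, p ∈ P) ∧ l.sum = v := by
    intro v hv
    induction hv using span_induction with
    | mem x hx => exact ⟨[x], by simp [hx]⟩
    | zero => exact ⟨[], by simp⟩
    | add x y hx hy ihx ihy =>
      obtain ⟨l1, hl1, hs1⟩ := ihx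
      obtain ⟨l2, hl2, hs2⟩ := ihy
      refine ⟨l1 ++ l2, ?_, by simp [hs1, hs2]⟩
      intro p hp
      rcases List.mem_append.mp hp with h | h
      · exact hl1 p h
      · exact hl2 p h
    | smul a x hx ihx =>
      obtain ⟨l, hl, hs⟩ := ihx
      rcases (by decide : ∀ r : ZMod 2, r = 0 ∨ r = 1) a with rfl | rfl
      · exact ⟨[], by simp⟩
      · exact ⟨l, hl, by simp [hs]⟩
  -- sums of lists of elements of P, when nonzero, lie in P ∪ Q
  have hsum : ∀ l : List V, (∀ p ∈ l, p ∈ P) → l.sum ≠ 0 → l.sum ∈ P ∪ Q := by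
    intro l
    induction l with
    | nil => simp
    | cons p l ih =>
      intro hl hs
      have hp : p ∈ P := hl p (by simp)
      rw [List.sum_cons] at hs ⊢
      by_cases h0 : l.sum = 0
      · rw [h0, add_zero]; exact Or.inl hp
      · have hw : l.sum ∈ P ∪ Q := ih (fun q hq => hl q (List.mem_cons_of_mem _ hq)) h0
        have hwR : l.sum ∉ R := by
          rcases hw with h | h
          · exact Set.disjoint_left.mp hPR h
          · exact Set.disjoint_left.mp hQR h
        have hw0 : l.sum ≠ 0 := h0
        have hpw : p ≠ l.sum := by
          rintro h
          exact hs (by rw [← h, hchar])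
        have hmem : p + l.sum ∈ P ∪ Q ∪ R := by rw [hunion]; exact hs
        rcases hmem with h | h
        · exact h
        · exact absurd h (fun hr => key1 p l.sum hp hw0 hpw hwR hr)
  have hspanl : ∀ l : List V, (∀ p ∈ l, p ∈ P) → l.sum ∈ span (ZMod 2) P := by
    intro l
    induction l with
    | nil => simp
    | cons q l ih2 =>
      intro hl
      rw [List.sum_cons]
      exact Submodule.add_mem _ (Submodule.subset_span (hl q (by simp)))
        (ih2 (fun r hr => hl r (List.mem_cons_of_mem _ hr)))
  constructor
  · rintro v ⟨hv, hv0⟩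
    obtain ⟨l, hl, hs⟩ := hlist v hv
    rw [← hs]
    exact hsum l hl (hs ▸ hv0)
  · intro x hx
    have hPS : P ⊆ (span (ZMod 2) P : Set V) := Submodule.subset_span
    -- translating an element outside the span by an element of P stays outside the span
    have hout : ∀ y : V, y ∉ span (ZMod 2) P → ∀ p ∈ P, y + p ∉ span (ZMod 2) P := by
      intro y hy p hp hmem
      apply hy
      have : y + p + p ∈ span (ZMod 2) P :=
        Submodule.add_mem _ hmem (Submodule.subset_span hp)
      rwa [add_assoc, hchar, add_zero] at this
    have hbasic : ∀ y : V, y ∉ span (ZMod 2) P → y ≠ 0 ∧ y ∉ P := by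
      intro y hy
      exact ⟨fun h => hy (h ▸ Submodule.zero_mem _), fun h => hy (hPS h)⟩
    -- Q propagation
    have hQp : ∀ y : V, y ∉ span (ZMod 2) P → y ∈ Q → ∀ p ∈ P, y + p ∈ Q := by
      intro y hy hyQ p hp
      have hyp : y + p ∉ span (ZMod 2) P := hout y hy p hp
      obtain ⟨hyp0, hypP⟩ := hbasic _ hyp
      have hmem : y + p ∈ P ∪ Q ∪ R := by rw [hunion]; exact hyp0
      rcases hmem with (h | h) | h
      · exact absurd h hypP
      · exact h
      · exfalso
        refine key1 p y hp (hne y (Or.inl (Or.inr hyQ))) ?_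
          (Set.disjoint_left.mp hQR hyQ) (by rwa [add_comm])
        rintro rfl
        exact hy (hPS hp)
    -- R propagation
    have hRp : ∀ y : V, y ∉ span (ZMod 2) P → y ∈ R → ∀ p ∈ P, y + p ∈ R := by
      intro y hy hyR p hp
      have hpy : p ≠ y := by rintro rfl; exact hy (hPS hp)
      have := key2 p y hp hyR hpy
      rwa [add_comm] at this
    -- propagation along lists
    have hQl : ∀ l : List V, (∀ p ∈ l, p ∈ P) → ∀ y : V, y ∉ span (ZMod 2) P → y ∈ Q →
        y + l.sum ∈ Q := by
      intro l
      induction l with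
      | nil => intro _ y _ hyQ; simpa using hyQ
      | cons p l ih =>
        intro hl y hy hyQ
        have hp : p ∈ P := hl p (by simp)
        have h1 : y + l.sum ∈ Q := ih (fun q hq => hl q (List.mem_cons_of_mem _ hq)) y hy hyQ
        have hls : l.sum ∈ span (ZMod 2) P :=
          hspanl l (fun q hq => hl q (List.mem_cons_of_mem _ hq))
        have h2 : y + l.sum ∉ span (ZMod 2) P := by
          intro h
          apply hy
          have : y + l.sum + l.sum ∈ span (ZMod 2) P := Submodule.add_mem _ h hls
          rwa [add_assoc, hchar, add_zero] at this
        have := hQp (y + l.sum) h2 h1 p hp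
        rw [List.sum_cons, show y + (p + l.sum) = y + l.sum + p from by abel]
        exact this
    have hRl : ∀ l : List V, (∀ p ∈ l, p ∈ P) → ∀ y : V, y ∉ span (ZMod 2) P → y ∈ R →
        y + l.sum ∈ R := by
      intro l
      induction l with
      | nil => intro _ y _ hyR; simpa using hyR
      | cons p l ih =>
        intro hl y hy hyR
        have hp : p ∈ P := hl p (by simp)
        have h1 : y + l.sum ∈ R := ih (fun q hq => hl q (List.mem_cons_of_mem _ hq)) y hy hyR
        have hls : l.sum ∈ span (ZMod 2) P :=
          hspanl l (fun q hq => hl q (List.mem_cons_of_mem _ hq))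
        have h2 : y + l.sum ∉ span (ZMod 2) P := by
          intro h
          apply hy
          have : y + l.sum + l.sum ∈ span (ZMod 2) P := Submodule.add_mem _ h hls
          rwa [add_assoc, hchar, add_zero] at this
        have := hRp (y + l.sum) h2 h1 p hp
        rw [List.sum_cons, show y + (p + l.sum) = y + l.sum + p from by abel]
        exact this
    obtain ⟨hx0, hxP⟩ := hbasic x hx
    have hxQR : x ∈ Q ∪ R := by
      have : x ∈ P ∪ Q ∪ R := by rw [hunion]; exact hx0
      rcases this with (h | h) | h
      · exact absurd h hxP
      · exact Or.inl h
      · exact Or.inr h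
    rcases hxQR with hxQ | hxR
    · left
      rintro _ ⟨s, hs, rfl⟩
      obtain ⟨l, hl, hsum⟩ := hlist s hs
      rw [← hsum]
      exact hQl l hl x hx hxQ
    · right
      rintro _ ⟨s, hs, rfl⟩
      obtain ⟨l, hl, hsum⟩ := hlist s hs
      rw [← hsum]
      exact hRl l hl x hx hxR
end

section
/- Let r ≥ 1 and let E be a subset of F_2^r \ {0} that spans F_2^r and is I_3-free (claw-free). Then |E| ≥ 2^(⌊r/2⌋) + 2^(⌈r/2⌉) − 2. -/
open Submodule

abbrev V2 (r : ℕ) := Fin r → ZMod 2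

def TriangleFree {r : ℕ} (E : Set (V2 r)) : Prop :=
  ∀ a ∈ E, ∀ b ∈ E, a + b ∉ E

/-- `E` has no induced `I_n`: no `n`-dimensional subspace `W` such that `E ∩ W` is a
basis of `W`. -/
def IFree {r : ℕ} (n : ℕ) (E : Set (V2 r)) : Prop :=
  ¬ ∃ S : Finset (V2 r), S.card = n ∧
      LinearIndependent (ZMod 2) (Subtype.val : ↥(S : Set (V2 r)) → V2 r) ∧
      E ∩ (span (ZMod 2) (S : Set (V2 r)) : Set (V2 r)) = (S : Set (V2 r))

lemma addself {r : ℕ} (x : V2 r) : x + x = 0 := by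
  funext i
  exact CharTwo.add_self_eq_zero _

lemma li_triple {r : ℕ} {x y z : V2 r} (h1 : x ≠ 0) (h2 : y ≠ 0) (h3 : z ≠ 0)
    (h4 : x + y ≠ 0) (h5 : x + z ≠ 0) (h6 : y + z ≠ 0) (h7 : x + y + z ≠ 0) :
    LinearIndependent (ZMod 2) ![x, y, z] := by
  rw [Fintype.linearIndependent_iff]
  intro g hg
  have hc : ∀ c : ZMod 2, c = 0 ∨ c = 1 := by decide
  simp [Fin.sum_univ_three] at hg
  rcases hc (g 0) with e0 | e0 <;> rcases hc (g 1) with e1 | e1 <;>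
    rcases hc (g 2) with e2 | e2 <;>
    simp [e0, e1, e2] at hg ⊢ <;>
    intro i <;> fin_cases i <;> simp [e0, e1, e2] <;>
    first
    | exact h1 hg
    | exact h2 hg
    | exact h3 hg
    | exact h4 hg
    | exact h5 hg
    | exact h6 hg
    | exact h7 hg

lemma claw_elim {r : ℕ} {E : Set (V2 r)} (h0 : (0 : V2 r) ∉ E) (hI3 : IFree 3 E)
    {x y z : V2 r} (hx : x ∈ E) (hy : y ∈ E) (hz : z ∈ E)
    (hli : LinearIndependent (ZMod 2) ![x, y, z]) :
    x + y ∈ E ∨ x + z ∈ E ∨ y + z ∈ E ∨ x + y + z ∈ E := by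
  classical
  by_contra hcon
  push_neg at hcon
  obtain ⟨n1, n2, n3, n4⟩ := hcon
  have hinj : Function.Injective ![x, y, z] := hli.injective
  have hxy : x ≠ y := fun h => by
    have : (0 : Fin 3) = 1 := hinj (by simpa using h); simp at this
  have hxz : x ≠ z := fun h => by
    have : (0 : Fin 3) = 2 := hinj (by simpa using h); simp at this
  have hyz : y ≠ z := fun h => by
    have : (1 : Fin 3) = 2 := hinj (by simpa using h); simp at this
  apply hI3
  refine ⟨{x, y, z}, ?_, ?_, ?_⟩
  · rw [Finset.card_insert_of_notMem (by simp [hxy, hxz]),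
      Finset.card_insert_of_notMem (by simp [hyz]), Finset.card_singleton]
  · have hset : ((({x, y, z} : Finset (V2 r)) : Set (V2 r))) = Set.range ![x, y, z] := by
      ext v; simp [Matrix.range_cons, Matrix.range_empty]; tauto
    rw [hset]
    exact (linearIndepOn_id_range_iff hli.injective).mpr hli
  · have hset : ((({x, y, z} : Finset (V2 r)) : Set (V2 r))) = ({x, y, z} : Set (V2 r)) := by
      simp
    rw [hset]
    ext v
    constructor
    · rintro ⟨hvE, hvspan⟩
      rw [SetLike.mem_coe, show ({x, y, z} : Set (V2 r)) = insert x {y, z} from rfl,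
        mem_span_insert] at hvspan
      obtain ⟨a, w, hw, rfl⟩ := hvspan
      rw [mem_span_pair] at hw
      obtain ⟨b, c, rfl⟩ := hw
      have hcs : ∀ t : ZMod 2, t = 0 ∨ t = 1 := by decide
      rcases hcs a with ha | ha <;> rcases hcs b with hb | hb <;> rcases hcs c with hc | hc <;>
        subst ha <;> subst hb <;> subst hc <;>
        simp only [zero_smul, one_smul, zero_add, add_zero] at hvE ⊢ <;>
        first
        | exact absurd hvE h0
        | exact absurd hvE n1
        | exact absurd hvE n2
        | exact absurd hvE n3
        | exact n1 (by rwa [add_comm] at hvE)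
        | exact n2 (by rwa [add_comm] at hvE)
        | exact n3 (by rwa [add_comm] at hvE)
        | exact absurd (by rwa [← add_assoc] at hvE) n4
        | simp
    · intro hv
      rcases hv with h | h | h
      · exact ⟨h ▸ hx, subset_span (by simp [h])⟩
      · exact ⟨h ▸ hy, subset_span (by simp [h])⟩
      · exact ⟨h ▸ hz, subset_span (by simp [h])⟩

lemma pow_aux (a b d : ℕ) (h1 : d ≤ a) (h2 : a ≤ b) :
    2 ^ a + 2 ^ b ≤ 2 ^ d + 2 ^ (b + (a - d)) := by
  obtain ⟨s, hs⟩ := Nat.exists_eq_add_of_le (Nat.one_le_two_pow : 1 ≤ 2 ^ (a - d))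
  have ea : 2 ^ a = 2 ^ d * 2 ^ (a - d) := by rw [← pow_add]; congr 1; omega
  have eb : 2 ^ (b + (a - d)) = 2 ^ b * 2 ^ (a - d) := by rw [pow_add]
  have hdb : (2 : ℕ) ^ d ≤ 2 ^ b := Nat.pow_le_pow_right (by norm_num) (le_trans h1 h2)
  rw [ea, eb, hs]
  nlinarith [mul_le_mul_left hdb s]

lemma pow_bound (r d : ℕ) (hd : d ≤ r) :
    2 ^ (r / 2) + 2 ^ ((r + 1) / 2) ≤ 2 ^ d + 2 ^ (r - d) := by
  rcases le_or_gt d (r / 2) with h | h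
  · have key := pow_aux (r / 2) ((r + 1) / 2) d h (by omega)
    have he : (r + 1) / 2 + (r / 2 - d) = r - d := by omega
    rwa [he] at key
  · have h' : r - d ≤ r / 2 := by omega
    have key := pow_aux (r / 2) ((r + 1) / 2) (r - d) h' (by omega)
    have he : (r + 1) / 2 + (r / 2 - (r - d)) = d := by omega
    rw [he] at key
    omega

theorem stmt8 {r : ℕ} (hr : 1 ≤ r) (E : Set (V2 r)) (h0 : (0 : V2 r) ∉ E)
    (hspan : span (ZMod 2) E = ⊤) (hI3 : IFree 3 E) :
    2 ^ (r / 2) + 2 ^ ((r + 1) / 2) - 2 ≤ E.ncard := by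
  classical
  -- the predicate of being a "full" submodule
  let P : Submodule (ZMod 2) (V2 r) → Prop := fun W => ∀ v : V2 r, v ∈ W → v ≠ 0 → v ∈ E
  have hPbot : P ⊥ := fun v hv hv0 => absurd ((Submodule.mem_bot _).1 hv) hv0
  have hfin : ∀ W : Submodule (ZMod 2) (V2 r), Module.finrank (ZMod 2) W ≤ r := by
    intro W
    have h := Submodule.finrank_le W
    rwa [Module.finrank_fin_fun] at h
  let T : Set ℕ := {n | ∃ W, P W ∧ Module.finrank (ZMod 2) W = n}
  have hTne : T.Nonempty := ⟨_, ⊥, hPbot, rfl⟩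
  have hTbdd : BddAbove T := ⟨r, by rintro n ⟨W, _, rfl⟩; exact hfin W⟩
  obtain ⟨W, hPW, hWrk⟩ : ∃ W, P W ∧ Module.finrank (ZMod 2) ↥W = sSup T :=
    Nat.sSup_mem hTne hTbdd
  have hWmax : ∀ W', P W' → Module.finrank (ZMod 2) ↥W' ≤ Module.finrank (ZMod 2) ↥W :=
    fun W' h => hWrk ▸ le_csSup hTbdd ⟨W', h, rfl⟩
  -- maximality consequence
  have hmax : ∀ y : V2 r, y ∈ E → y ∉ W → ∃ w, w ∈ W ∧ y + w ∉ E := by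
    intro y hyE hyW
    by_contra hall
    push_neg at hall
    have hPW' : P (W ⊔ span (ZMod 2) {y}) := by
      intro v hv hv0
      rcases Submodule.mem_sup.1 hv with ⟨w, hw, s, hs, rfl⟩
      rcases Submodule.mem_span_singleton.1 hs with ⟨c, rfl⟩
      rcases (show ∀ t : ZMod 2, t = 0 ∨ t = 1 by decide) c with h | h
      · subst h; rw [zero_smul, add_zero] at hv0 ⊢; exact hPW w hw hv0
      · subst h; rw [one_smul, add_comm]; exact hall w hw
    have hylt : y ∈ W ⊔ span (ZMod 2) {y} :=
      Submodule.mem_sup_right (Submodule.mem_span_singleton_self y)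
    have hlt : W < W ⊔ span (ZMod 2) {y} :=
      lt_of_le_of_ne le_sup_left (fun h => hyW (by rw [h]; exact hylt))
    have := Submodule.finrank_lt_finrank_of_lt hlt
    exact absurd (hWmax _ hPW') (not_le.2 this)
  -- quotient
  set π := W.mkQ with hπdef
  have pz : ∀ w ∈ W, π w = 0 := fun w hw => by
    rw [hπdef, Submodule.mkQ_apply, Submodule.Quotient.mk_eq_zero]; exact hw
  have qself : ∀ q : V2 r ⧸ W, q + q = 0 := fun q => by
    rw [← two_smul (ZMod 2) q, show (2 : ZMod 2) = 0 by decide, zero_smul]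
  have qcancel : ∀ q1 q2 : V2 r ⧸ W, q1 + q2 = 0 → q1 = q2 := by
    intro q1 q2 h
    calc q1 = q1 + (q2 + q2) := by rw [qself, add_zero]
    _ = (q1 + q2) + q2 := by rw [add_assoc]
    _ = q2 := by rw [h, zero_add]
  have hne0 : ∀ v : V2 r, π v ≠ 0 → v ≠ 0 := fun v h hv => h (by rw [hv, map_zero])
  set H : Set (V2 r ⧸ W) := (π '' E) ∪ {0} with hHdef
  -- main closure property
  have hclosed : ∀ y ∈ E, ∀ z ∈ E, π y + π z ∈ H := by
    intro y hyE z hzE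
    by_cases hy0 : π y = 0
    · rw [hy0, zero_add]; exact Or.inl ⟨z, hzE, rfl⟩
    by_cases hz0 : π z = 0
    · rw [hz0, add_zero]; exact Or.inl ⟨y, hyE, rfl⟩
    by_cases hyz : π y = π z
    · rw [hyz, qself]; exact Or.inr rfl
    by_contra hq
    have hempty : ∀ w ∈ W, y + z + w ∉ E := by
      intro w hw hmem
      exact hq (Or.inl ⟨y + z + w, hmem, by rw [map_add, map_add, pz w hw, add_zero]⟩)
    have hyW : y ∉ W := fun h => hy0 (pz y h)
    have hzW : z ∉ W := fun h => hz0 (pz z h)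
    have hyzsum : π y + π z ≠ 0 := fun h => hyz (qcancel _ _ h)
    have haor : ∀ w ∈ W, (y + w ∈ E) ∨ (z + w ∈ E) := by
      intro w hw
      by_cases hw0 : w = 0
      · left; rw [hw0, add_zero]; exact hyE
      have hwE : w ∈ E := hPW w hw hw0
      have hli : LinearIndependent (ZMod 2) ![y, z, w] := by
        refine li_triple (hne0 y hy0) (hne0 z hz0) hw0 ?_ ?_ ?_ ?_
        · exact hne0 _ (by rw [map_add]; exact hyzsum)
        · exact hne0 _ (by rw [map_add, pz w hw, add_zero]; exact hy0)
        · exact hne0 _ (by rw [map_add, pz w hw, add_zero]; exact hz0)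
        · exact hne0 _ (by rw [map_add, map_add, pz w hw, add_zero]; exact hyzsum)
      rcases claw_elim h0 hI3 hyE hzE hwE hli with h | h | h | h
      · exact absurd h (by have h2 := hempty 0 (zero_mem W); rwa [add_zero] at h2)
      · exact Or.inl h
      · exact Or.inr h
      · exact absurd h (hempty w hw)
    obtain ⟨b', hb'W, hb'nE⟩ := hmax y hyE hyW
    obtain ⟨a', ha'W, ha'nE⟩ := hmax z hzE hzW
    have hb'B : z + b' ∈ E := (haor b' hb'W).resolve_left hb'nE
    have ha'A : y + a' ∈ E := (haor a' ha'W).resolve_right ha'nE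
    have hab : a' ≠ b' := fun h => hb'nE (h ▸ ha'A)
    have vcancel : ∀ u v : V2 r, u + v = 0 → u = v := by
      intro u v h
      calc u = u + (v + v) := by rw [addself, add_zero]
      _ = (u + v) + v := by rw [add_assoc]
      _ = v := by rw [h, zero_add]
    have hab0 : a' + b' ≠ 0 := fun h => hab (vcancel _ _ h)
    have habW : a' + b' ∈ W := W.add_mem ha'W hb'W
    have habE : a' + b' ∈ E := hPW _ habW hab0
    have hli2 : LinearIndependent (ZMod 2) ![y + a', z + b', a' + b'] := by
      refine li_triple ?_ ?_ hab0 ?_ ?_ ?_ ?_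
      · exact hne0 _ (by rw [map_add, pz a' ha'W, add_zero]; exact hy0)
      · exact hne0 _ (by rw [map_add, pz b' hb'W, add_zero]; exact hz0)
      · exact hne0 _ (by
          rw [map_add, map_add, map_add, pz a' ha'W, pz b' hb'W, add_zero, add_zero]
          exact hyzsum)
      · exact hne0 _ (by
          rw [map_add, map_add, pz a' ha'W, add_zero, pz _ habW, add_zero]; exact hy0)
      · exact hne0 _ (by
          rw [map_add, map_add, pz b' hb'W, add_zero, pz _ habW, add_zero]; exact hz0)
      · exact hne0 _ (by
          rw [map_add, map_add, map_add, map_add, pz a' ha'W, pz b' hb'W, pz _ habW,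
            add_zero, add_zero, add_zero]
          exact hyzsum)
    rcases claw_elim h0 hI3 ha'A hb'B habE hli2 with h | h | h | h
    · have e : (y + a') + (z + b') = y + z + (a' + b') := by abel
      exact hempty _ habW (e ▸ h)
    · have e : (y + a') + (a' + b') = (y + b') + (a' + a') := by abel
      rw [addself, add_zero] at e
      exact hb'nE (e ▸ h)
    · have e : (z + b') + (a' + b') = (z + a') + (b' + b') := by abel
      rw [addself, add_zero] at e
      exact ha'nE (e ▸ h)
    · have e : (y + a') + (z + b') + (a' + b') = (y + z) + (a' + a') + (b' + b') := by abel
      rw [addself, addself, add_zero, add_zero] at e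
      have h2 := hempty 0 (zero_mem W)
      rw [add_zero] at h2
      exact h2 (e ▸ h)
  -- H is everything
  have htop : ∀ q : V2 r ⧸ W, q ∈ H := by
    let Hsub : Submodule (ZMod 2) (V2 r ⧸ W) :=
      { carrier := H
        zero_mem' := Or.inr rfl
        add_mem' := by
          rintro q1 q2 h1 h2
          rcases h1 with ⟨y, hyE, rfl⟩ | h1
          · rcases h2 with ⟨z, hzE, rfl⟩ | h2
            · exact hclosed y hyE z hzE
            · rw [Set.mem_singleton_iff] at h2
              rw [h2, add_zero]; exact Or.inl ⟨y, hyE, rfl⟩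
          · rw [Set.mem_singleton_iff] at h1
            rw [h1, zero_add]; exact h2
        smul_mem' := by
          intro c q hq
          rcases (show ∀ t : ZMod 2, t = 0 ∨ t = 1 by decide) c with h | h
          · rw [h, zero_smul]; exact Or.inr rfl
          · rw [h, one_smul]; exact hq }
    intro q
    have h1 : span (ZMod 2) (π '' E) = ⊤ := by
      rw [hπdef, Submodule.span_image, hspan, Submodule.map_top, Submodule.range_mkQ]
    have h2 : span (ZMod 2) (π '' E) ≤ Hsub := Submodule.span_le.2 (fun v hv => Or.inl hv)
    exact h2 (by rw [h1]; exact Submodule.mem_top)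
  -- counting
  letI : Fintype ↥W := Fintype.ofFinite _
  letI : Fintype (V2 r ⧸ W) := Fintype.ofFinite _
  set d := Module.finrank (ZMod 2) ↥W with hd
  have hdr : d ≤ r := hfin W
  have hqrank : Module.finrank (ZMod 2) (V2 r ⧸ W) = r - d := by
    have h := Submodule.finrank_quotient_add_finrank W
    rw [Module.finrank_fin_fun] at h
    omega
  have hcardW : Nat.card ↥W = 2 ^ d := by
    rw [Nat.card_eq_fintype_card, Module.card_eq_pow_finrank (K := ZMod 2), ZMod.card]
  have hcardQ : Nat.card (V2 r ⧸ W) = 2 ^ (r - d) := by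
    rw [Nat.card_eq_fintype_card, Module.card_eq_pow_finrank (K := ZMod 2), ZMod.card, hqrank]
  have hEW : E ∩ (W : Set (V2 r)) = (W : Set (V2 r)) \ {0} := by
    ext v
    constructor
    · rintro ⟨hvE, hvW⟩
      exact ⟨hvW, fun h => h0 ((Set.mem_singleton_iff.1 h) ▸ hvE)⟩
    · rintro ⟨hvW, hv0⟩
      exact ⟨hPW v hvW (by simpa using hv0), hvW⟩
  have hWn : (W : Set (V2 r)).ncard = 2 ^ d := by
    rw [← Nat.card_coe_set_eq]
    exact hcardW
  have hc1 : (E ∩ (W : Set (V2 r))).ncard = 2 ^ d - 1 := by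
    rw [hEW, Set.ncard_diff_singleton_of_mem (SetLike.mem_coe.2 (zero_mem W)), hWn]
  have hc2 : 2 ^ (r - d) - 1 ≤ (E \ (W : Set (V2 r))).ncard := by
    have himg : (Set.univ \ {0} : Set (V2 r ⧸ W)) ⊆ π '' (E \ (W : Set (V2 r))) := by
      rintro q ⟨-, hq0⟩
      rw [Set.mem_singleton_iff] at hq0
      rcases htop q with ⟨v, hvE, rfl⟩ | h
      · exact ⟨v, ⟨hvE, fun hvW => hq0 (pz v hvW)⟩, rfl⟩
      · exact absurd h hq0
    calc 2 ^ (r - d) - 1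
        = (Set.univ \ {0} : Set (V2 r ⧸ W)).ncard := by
          rw [Set.ncard_diff_singleton_of_mem (Set.mem_univ 0), Set.ncard_univ, hcardQ]
      _ ≤ (π '' (E \ (W : Set (V2 r)))).ncard := Set.ncard_le_ncard himg (Set.toFinite _)
      _ ≤ (E \ (W : Set (V2 r))).ncard := Set.ncard_image_le (Set.toFinite _)
  have hsplit := Set.ncard_inter_add_ncard_diff_eq_ncard E (W : Set (V2 r)) (Set.toFinite E)
  have hpw := pow_bound r d hdr
  have h1d : 1 ≤ 2 ^ d := Nat.one_le_two_pow
  have h1rd : 1 ≤ 2 ^ (r - d) := Nat.one_le_two_pow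
  omega
end

section
/- Let E be a spanning subset of F_2^r \ {0} that is both I_3-free and triangle-free. Then E is the complement of a hyperplane: there exists a linear functional f : F_2^r → F_2 with E = {v ∈ F_2^r : f(v) = 1}. -/
open Submodule

lemma zmod2_cases (k : ZMod 2) : k = 0 ∨ k = 1 := by revert k; decide

lemma v2_add_self {r : ℕ} (a : V2 r) : a + a = 0 := by
  funext i; exact CharTwo.add_self_eq_zero (a i)

lemma tripleSum {r : ℕ} {E : Set (V2 r)} (h0 : (0 : V2 r) ∉ E)
    (hTF : TriangleFree E) (hI3 : IFree 3 E) :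
    ∀ a ∈ E, ∀ b ∈ E, ∀ c ∈ E, a + b + c ∈ E := by
  intro a ha b hb c hc
  by_cases hab : a = b
  · subst hab; rw [v2_add_self, zero_add]; exact hc
  by_cases hac : a = c
  · subst hac
    have : a + b + a = b := by rw [add_comm a b, add_assoc, v2_add_self, add_zero]
    rw [this]; exact hb
  by_cases hbc : b = c
  · subst hbc
    have : a + b + b = a := by rw [add_assoc, v2_add_self, add_zero]
    rw [this]; exact ha
  by_contra hnot
  apply hI3
  have ha0 : a ≠ 0 := fun h => h0 (h ▸ ha)
  have hb0 : b ≠ 0 := fun h => h0 (h ▸ hb)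
  have hc0 : c ≠ 0 := fun h => h0 (h ▸ hc)
  have habc : a ≠ b + c := fun h => hTF b hb c hc (h ▸ ha)
  refine ⟨{a, b, c}, Finset.card_eq_three.mpr ⟨a, b, c, hab, hac, hbc, rfl⟩, ?_, ?_⟩
  · have hset : (({a, b, c} : Finset (V2 r)) : Set (V2 r)) = insert a (insert b {c}) := by
      simp
    rw [hset]
    refine LinearIndepOn.id_insert (x := a) ?_ ?_
    · refine LinearIndepOn.id_insert (x := b) ((linearIndepOn_singleton_iff (ZMod 2)).mpr hc0 : LinearIndepOn (ZMod 2) id {c}) ?_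
      rw [Submodule.mem_span_singleton]
      rintro ⟨k, hk⟩
      rcases zmod2_cases k with h | h <;> subst h <;> simp at hk
      · exact hb0 hk.symm
      · exact hbc hk.symm
    · intro hmem
      rw [Submodule.mem_span_insert] at hmem
      obtain ⟨k, z, hz, hkz⟩ := hmem
      rw [Submodule.mem_span_singleton] at hz
      obtain ⟨m, hm⟩ := hz
      subst hm
      rcases zmod2_cases k with h | h <;> subst h <;>
        rcases zmod2_cases m with h' | h' <;> subst h' <;> simp at hkz <;>
        first
          | exact ha0 hkz
          | exact hab hkz
          | exact hac hkz
          | exact habc hkz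
  · ext x
    simp only [Set.mem_inter_iff, Finset.coe_insert, Finset.coe_singleton, SetLike.mem_coe]
    constructor
    · rintro ⟨hxE, hxspan⟩
      rw [Submodule.mem_span_insert] at hxspan
      obtain ⟨k, z, hz, hkz⟩ := hxspan
      rw [Submodule.mem_span_insert] at hz
      obtain ⟨l, w, hw, hlw⟩ := hz
      rw [Submodule.mem_span_singleton] at hw
      obtain ⟨m, hm⟩ := hw
      subst hm; subst hlw; subst hkz
      rcases zmod2_cases k with h | h <;> subst h <;>
        rcases zmod2_cases l with h' | h' <;> subst h' <;>
          rcases zmod2_cases m with h'' | h'' <;> subst h'' <;>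
            simp only [zero_smul, one_smul, zero_add, add_zero] at hxE ⊢
      · exact absurd hxE h0
      · simp
      · simp
      · exact absurd hxE (hTF b hb c hc)
      · simp
      · exact absurd hxE (hTF a ha c hc)
      · exact absurd hxE (hTF a ha b hb)
      · exact absurd (by rwa [← add_assoc] at hxE) hnot
    · rintro (rfl | rfl | rfl)
      · exact ⟨ha, subset_span (by simp)⟩
      · exact ⟨hb, subset_span (by simp)⟩
      · exact ⟨hc, subset_span (by simp)⟩

theorem stmt9 {r : ℕ} (E : Set (V2 r)) (h0 : (0 : V2 r) ∉ E)
    (hspan : span (ZMod 2) E = ⊤) (hTF : TriangleFree E) (hI3 : IFree 3 E) :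
    ∃ f : V2 r →ₗ[ZMod 2] ZMod 2, E = {v : V2 r | f v = 1} := by
  rcases E.eq_empty_or_nonempty with hE | ⟨e, he⟩
  · exact ⟨0, by simp [hE]⟩
  have h3 := tripleSum h0 hTF hI3
  set H : Submodule (ZMod 2) (V2 r) :=
    span (ZMod 2) {x | ∃ a ∈ E, ∃ b ∈ E, x = a + b} with hH
  -- key: e + h ∈ E for h ∈ H
  have key : ∀ h ∈ H, e + h ∈ E := by
    intro h hh
    induction hh using Submodule.span_induction with
    | mem x hx =>
      obtain ⟨a, ha, b, hb, rfl⟩ := hx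
      rw [← add_assoc]; exact h3 e he a ha b hb
    | zero => simpa using he
    | add x y hx hy ihx ihy =>
      have := h3 (e + x) ihx (e + y) ihy e he
      have heq : e + x + (e + y) + e = e + (x + y) + (e + e) := by abel
      rw [v2_add_self, add_zero] at heq
      rwa [heq] at this
    | smul c x hx ih =>
      rcases zmod2_cases c with h | h <;> subst h <;> simp [ih, he]
  have hHnotE : ∀ h ∈ H, h ∉ E := by
    intro h hh hhE
    exact hTF e he h hhE (key h hh)
  have heH : e ∉ H := fun h => hHnotE e h he
  -- E ⊆ e + H, so H ⊔ span {e} = ⊤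
  have hEH : ∀ a ∈ E, a + e ∈ H := by
    intro a ha
    exact subset_span ⟨a, ha, e, he, rfl⟩
  have htop : H ⊔ span (ZMod 2) {e} = ⊤ := by
    rw [← top_le_iff, ← hspan, span_le]
    intro a ha
    have : a = (a + e) + e := by rw [add_assoc, v2_add_self, add_zero]
    rw [SetLike.mem_coe, this]
    exact Submodule.add_mem_sup (hEH a ha) (subset_span rfl)
  have hdisj : Disjoint H (span (ZMod 2) {e}) := by
    rw [disjoint_iff]
    ext x
    simp only [Submodule.mem_inf, Submodule.mem_bot, Submodule.mem_span_singleton]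
    constructor
    · rintro ⟨hxH, k, rfl⟩
      rcases zmod2_cases k with h | h <;> subst h <;> simp_all
    · rintro rfl; exact ⟨zero_mem _, 0, by simp⟩
  have hcompl : IsCompl H (span (ZMod 2) {e}) := ⟨hdisj, codisjoint_iff.mpr htop⟩
  -- a coordinate where e is 1
  have he0 : e ≠ 0 := fun h => h0 (h ▸ he)
  obtain ⟨i, hi⟩ : ∃ i, e i ≠ 0 := by
    by_contra h; push_neg at h; exact he0 (funext h)
  have hei : e i = 1 := by
    rcases zmod2_cases (e i) with h | h
    · exact absurd h hi
    · exact h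
  set g : span (ZMod 2) {e} →ₗ[ZMod 2] ZMod 2 :=
    (LinearMap.proj i).comp (Submodule.subtype _) with hg
  set f := LinearMap.ofIsCompl hcompl 0 g with hf
  have hfH : ∀ h ∈ H, f h = 0 := by
    intro h hh
    have := LinearMap.ofIsCompl_left_apply hcompl (φ := 0) (ψ := g) ⟨h, hh⟩
    simpa [hf] using this
  have hfe : f e = 1 := by
    have := LinearMap.ofIsCompl_right_apply hcompl (φ := 0) (ψ := g)
      ⟨e, subset_span rfl⟩
    simpa [hf, hg, hei] using this
  refine ⟨f, ?_⟩
  ext v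
  simp only [Set.mem_setOf_eq]
  constructor
  · intro hv
    have : v = (v + e) + e := by rw [add_assoc, v2_add_self, add_zero]
    rw [this, map_add, hfH _ (hEH v hv), hfe, zero_add]
  · intro hv
    have hvtop : v ∈ H ⊔ span (ZMod 2) {e} := htop ▸ Submodule.mem_top
    rw [Submodule.mem_sup] at hvtop
    obtain ⟨h, hh, z, hz, rfl⟩ := hvtop
    rw [Submodule.mem_span_singleton] at hz
    obtain ⟨k, rfl⟩ := hz
    rcases zmod2_cases k with h' | h' <;> subst h' <;>
      simp only [map_add, hfH _ hh, zero_add, zero_smul, one_smul, map_zero, map_smul] at hv ⊢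
    · exact absurd hv (by simp)
    · rw [hfe] at hv
      have : h + e = e + h := add_comm _ _
      rw [this]
      exact key h hh
end

section
/- Let E ⊆ F_2^7 \ {0} be triangle-free, I_5-free, and C_5-free, and let H be a 6-dimensional subspace such that E ∩ H is an induced 6-circuit (six distinct vectors v_1,...,v_6 with v_1+...+v_6 = 0, any five linearly independent, E ∩ H = {v_1,...,v_6}). If E \ H is nonempty, then |E \ H| ≥ 4. -/
open Submodule

/-- `E` has no induced `n`-circuit: no `(n-1)`-dimensional subspace `F` with `E ∩ F`
equal to `n` distinct vectors summing to zero, any `n - 1` of which are linearly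
independent. -/
def CircFree {r : ℕ} (n : ℕ) (E : Set (V2 r)) : Prop :=
  ¬ ∃ (F : Submodule (ZMod 2) (V2 r)) (S : Finset (V2 r)),
      Module.finrank (ZMod 2) F = n - 1 ∧ S.card = n ∧
      (S : Set (V2 r)) ⊆ (F : Set (V2 r)) ∧ (∑ x ∈ S, x) = 0 ∧
      (∀ T ⊆ S, T.card = n - 1 →
        LinearIndependent (ZMod 2) (Subtype.val : ↥(T : Set (V2 r)) → V2 r)) ∧
      E ∩ (F : Set (V2 r)) = (S : Set (V2 r))

lemma stmt16_char2 (v : V2 7) : v + v = 0 := by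
  funext i; exact CharTwo.add_self_eq_zero _

lemma stmt16_sum_indep {T K : Finset (V2 7)} (hKT : K ⊆ T)
    (hli : LinearIndependent (ZMod 2) (Subtype.val : ↥(T : Set (V2 7)) → V2 7))
    (hz : (∑ x ∈ K, x) = 0) : K = ∅ := by
  classical
  by_contra hK
  obtain ⟨a, ha⟩ := Finset.nonempty_of_ne_empty hK
  have := Fintype.linearIndependent_iff.mp hli
    (fun i => if (i : V2 7) ∈ K then 1 else 0) ?_ ⟨a, by simpa using hKT ha⟩
  · simp [ha] at this
  · rw [Finset.sum_set_coe (f := fun v : V2 7 => (if v ∈ K then (1 : ZMod 2) else 0) • v),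
      Finset.toFinset_coe]
    simp only [ite_smul, one_smul, zero_smul]
    rw [← Finset.sum_filter, Finset.filter_mem_eq_inter, Finset.inter_eq_right.mpr hKT]
    exact hz

lemma stmt16_subset_sum {T : Finset (V2 7)} {d : V2 7}
    (hd : d ∈ span (ZMod 2) (T : Set (V2 7))) : ∃ I ⊆ T, (∑ x ∈ I, x) = d := by
  classical
  obtain ⟨f, hf⟩ := mem_span_finset.mp hd
  refine ⟨T.filter (fun v => f v = 1), Finset.filter_subset _ _, ?_⟩
  rw [← hf.2]
  have h1 : ∑ x ∈ T.filter (fun v => f v = 1), x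
      = ∑ x ∈ T.filter (fun v => f v = 1), f x • x :=
    Finset.sum_congr rfl (fun x hx => by rw [(Finset.mem_filter.mp hx).2, one_smul])
  rw [h1]
  refine Finset.sum_filter_of_ne ?_
  intro x _ hne
  rcases (show ∀ a : ZMod 2, a = 0 ∨ a = 1 by decide) (f x) with h | h
  · exact absurd (by rw [h, zero_smul]) hne
  · exact h

lemma stmt16_symmdiff {I J : Finset (V2 7)} (h : (∑ x ∈ I, x) = ∑ x ∈ J, x) :
    (∑ x ∈ (I \ J) ∪ (J \ I), x) = 0 := by
  classical
  have h1 : ∑ x ∈ I \ (I ∩ J), x + ∑ x ∈ I ∩ J, x = ∑ x ∈ I, x :=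
    Finset.sum_sdiff (Finset.inter_subset_left)
  have h2 : ∑ x ∈ J \ (J ∩ I), x + ∑ x ∈ J ∩ I, x = ∑ x ∈ J, x :=
    Finset.sum_sdiff (Finset.inter_subset_left)
  have hu : ∑ x ∈ (I \ J) ∪ (J \ I), x = ∑ x ∈ I \ J, x + ∑ x ∈ J \ I, x :=
    Finset.sum_union (disjoint_sdiff_sdiff)
  rw [Finset.sdiff_inter_self_left] at h1
  rw [Finset.sdiff_inter_self_left, Finset.inter_comm] at h2
  set a := ∑ x ∈ I \ J, x
  set b := ∑ x ∈ J \ I, x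
  set m := ∑ x ∈ I ∩ J, x
  have hab : a + b = (a + m) + (b + m) := by
    have : (a + m) + (b + m) = (a + b) + (m + m) := by abel
    rw [this, stmt16_char2, add_zero]
  rw [hu, hab, h1, h2, h, stmt16_char2]

lemma stmt16_add_mem {H : Submodule (ZMod 2) (V2 7)}
    (hH : Module.finrank (ZMod 2) H = 6) {x y : V2 7}
    (hx : x ∉ H) (hy : y ∉ H) : x + y ∈ H := by
  have hfr : Module.finrank (ZMod 2) (V2 7) = 7 := by
    simp [Module.finrank_pi]
  have hlt : H < H ⊔ span (ZMod 2) {x} := by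
    refine lt_of_le_of_ne le_sup_left ?_
    intro h
    exact hx (h ▸ Submodule.mem_sup_right (mem_span_singleton_self x))
  have h7 : Module.finrank (ZMod 2) ↥(H ⊔ span (ZMod 2) {x}) = 7 := by
    have h1 := finrank_lt_finrank_of_lt hlt
    have h2 := hfr ▸ finrank_le (H ⊔ span (ZMod 2) {x})
    omega
  have htop : H ⊔ span (ZMod 2) {x} = ⊤ := eq_top_of_finrank_eq (h7.trans hfr.symm)
  have hy' : y ∈ H ⊔ span (ZMod 2) {x} := htop ▸ mem_top
  obtain ⟨h, hhH, s, hs, hsum⟩ := mem_sup.mp hy'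
  obtain ⟨c, rfl⟩ := mem_span_singleton.mp hs
  rcases (show ∀ a : ZMod 2, a = 0 ∨ a = 1 by decide) c with rfl | rfl
  · rw [zero_smul, add_zero] at hsum
    exact absurd (hsum ▸ hhH) hy
  · rw [one_smul] at hsum
    have hxy : x + y = h := by
      rw [← hsum, ← add_assoc, add_comm x h, add_assoc, stmt16_char2, add_zero]
    exact hxy ▸ hhH

lemma stmt16_cardQ {S K : Finset (V2 7)} (hK : K ⊆ S) :
    ((S.powersetCard 4).filter (fun A => K ⊆ A)).card ≤ (S.card - K.card).choose (4 - K.card) := by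
  classical
  have hle : ((S.powersetCard 4).filter (fun A => K ⊆ A)).card
      ≤ ((S \ K).powersetCard (4 - K.card)).card := by
    apply Finset.card_le_card_of_injOn (fun A => A \ K)
    · intro A hA
      rw [Finset.mem_coe, Finset.mem_filter, Finset.mem_powersetCard] at hA
      obtain ⟨⟨hAS, hA4⟩, hKA⟩ := hA
      rw [Finset.mem_coe, Finset.mem_powersetCard]
      exact ⟨Finset.sdiff_subset_sdiff hAS le_rfl, by show (A \ K).card = _; rw [Finset.card_sdiff_of_subset hKA, hA4]⟩
    · intro A hA B hB hAB
      simp only [Finset.coe_filter, Set.mem_setOf_eq] at hA hB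
      have hAB' : A \ K = B \ K := hAB
      rw [← Finset.sdiff_union_of_subset hA.2, ← Finset.sdiff_union_of_subset hB.2, hAB']
  rwa [Finset.card_powersetCard, Finset.card_sdiff_of_subset hK] at hle

theorem stmt16 (E : Set (V2 7)) (h0 : (0 : V2 7) ∉ E)
    (hTF : TriangleFree E) (hI5 : IFree 5 E) (hC5 : CircFree 5 E)
    (H : Submodule (ZMod 2) (V2 7)) (hH : Module.finrank (ZMod 2) H = 6)
    (S : Finset (V2 7)) (hS6 : S.card = 6) (hSH : (S : Set (V2 7)) ⊆ (H : Set (V2 7)))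
    (hsum : (∑ x ∈ S, x) = 0)
    (hind : ∀ T ⊆ S, T.card = 5 →
      LinearIndependent (ZMod 2) (Subtype.val : ↥(T : Set (V2 7)) → V2 7))
    (hEH : E ∩ (H : Set (V2 7)) = (S : Set (V2 7)))
    (hne : (E \ (H : Set (V2 7))).Nonempty) :
    4 ≤ (E \ (H : Set (V2 7))).ncard := by
  classical
  by_contra hcon
  push_neg at hcon
  have hSE : (S : Set (V2 7)) ⊆ E := hEH ▸ Set.inter_subset_left
  obtain ⟨x, hxE, hxH⟩ := hne
  have hfin : (E \ (H : Set (V2 7))).Finite := Set.toFinite _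
  have hXcard : hfin.toFinset.card ≤ 3 := by
    rw [← Set.ncard_eq_toFinset_card _ hfin]; omega
  have hxX : x ∈ hfin.toFinset := hfin.mem_toFinset.mpr ⟨hxE, hxH⟩
  set D : Finset (V2 7) := (hfin.toFinset.erase x).image (fun y => x + y) with hDdef
  have hDcard : D.card ≤ 2 := by
    have h0 : D.card = ((hfin.toFinset.erase x).image (fun y => x + y)).card := by rw [hDdef]
    have h1 := Finset.card_image_le (s := hfin.toFinset.erase x) (f := fun y => x + y)
    have h2 := Finset.card_erase_of_mem hxX
    omega
  have hDspec : ∀ d ∈ D, d ∈ H ∧ d ∉ E ∧ d ≠ 0 := by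
    intro d hd
    obtain ⟨y, hy, rfl⟩ := Finset.mem_image.mp hd
    obtain ⟨hyx, hyX⟩ := Finset.mem_erase.mp hy
    obtain ⟨hyE, hyH⟩ := hfin.mem_toFinset.mp hyX
    refine ⟨stmt16_add_mem hH hxH hyH, hTF x hxE y hyE, ?_⟩
    intro h
    apply hyx
    have h2 : x + (x + y) = x + 0 := by rw [h]
    rwa [← add_assoc, stmt16_char2, zero_add, add_zero] at h2
  -- Claim A : every 4-subset of S spans some element of D
  have claimA : ∀ A ∈ S.powersetCard 4, ∃ d ∈ D,
      d ∈ span (ZMod 2) ((A : Set (V2 7))) := by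
    intro A hA
    rw [Finset.mem_powersetCard] at hA
    obtain ⟨hAS, hA4⟩ := hA
    have hAScoe : (A : Set (V2 7)) ⊆ (S : Set (V2 7)) := Finset.coe_subset.mpr hAS
    have hAH : (A : Set (V2 7)) ⊆ (H : Set (V2 7)) := hAScoe.trans hSH
    have hxspanA : x ∉ span (ZMod 2) (A : Set (V2 7)) := fun hx' =>
      hxH (span_le.mpr hAH hx')
    have hindA : LinearIndependent (ZMod 2) (Subtype.val : ↥(A : Set (V2 7)) → V2 7) := by
      have hSA : (S \ A).Nonempty := by
        rw [← Finset.card_pos, Finset.card_sdiff_of_subset hAS]; omega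
      obtain ⟨v, hv⟩ := hSA
      rw [Finset.mem_sdiff] at hv
      have h5 := hind (insert v A) (Finset.insert_subset_iff.mpr ⟨hv.1, hAS⟩)
        (by rw [Finset.card_insert_of_notMem hv.2, hA4])
      have hsub : (A : Set (V2 7)) ⊆ ((insert v A : Finset (V2 7)) : Set (V2 7)) :=
        Finset.coe_subset.mpr (Finset.subset_insert v A)
      exact LinearIndepOn.mono (v := id) h5 hsub
    have hxA : x ∉ A := fun h => hxH (hSH (hAScoe (Finset.mem_coe.mpr h)))
    have hTcoe : ((insert x A : Finset (V2 7)) : Set (V2 7)) = insert x (A : Set (V2 7)) :=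
      Finset.coe_insert x A
    have hindT : LinearIndependent (ZMod 2)
        (Subtype.val : ↥((insert x A : Finset (V2 7)) : Set (V2 7)) → V2 7) := by
      rw [hTcoe]; exact LinearIndepOn.id_insert hindA hxspanA
    have hTE : ((insert x A : Finset (V2 7)) : Set (V2 7)) ⊆ E := by
      rw [hTcoe]
      rintro z hz
      rcases Set.mem_insert_iff.mp hz with rfl | hz
      · exact hxE
      · exact hSE (hAScoe hz)
    have hneq : E ∩ (span (ZMod 2) ((insert x A : Finset (V2 7)) : Set (V2 7)) : Set (V2 7))
        ≠ ((insert x A : Finset (V2 7)) : Set (V2 7)) := by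
      intro h
      exact hI5 ⟨insert x A, by rw [Finset.card_insert_of_notMem hxA, hA4], hindT, h⟩
    have hnsub : ¬ (E ∩ (span (ZMod 2) ((insert x A : Finset (V2 7)) : Set (V2 7)) : Set (V2 7))
        ⊆ ((insert x A : Finset (V2 7)) : Set (V2 7))) := by
      intro h
      exact hneq (h.antisymm (fun z hz => ⟨hTE hz, subset_span hz⟩))
    obtain ⟨z, hz, hzT⟩ := Set.not_subset.mp hnsub
    obtain ⟨hzE, hzspan⟩ := hz
    have hzspan' : z ∈ span (ZMod 2) (insert x (A : Set (V2 7))) := by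
      rw [← hTcoe]; exact hzspan
    obtain ⟨c, w, hw, hzw⟩ := mem_span_insert.mp hzspan'
    rw [hTcoe] at hzT
    rcases (show ∀ a : ZMod 2, a = 0 ∨ a = 1 by decide) c with rfl | rfl
    · exfalso
      rw [zero_smul, zero_add] at hzw
      subst hzw
      have hzH : z ∈ H := span_le.mpr hAH hw
      have hzS : z ∈ (S : Set (V2 7)) := hEH ▸ Set.mem_inter hzE hzH
      have hzA : z ∉ A := fun h => hzT (Set.mem_insert_iff.mpr (Or.inr (Finset.mem_coe.mpr h)))
      have h5 := hind (insert z A)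
        (Finset.insert_subset_iff.mpr ⟨Finset.mem_coe.mp hzS, hAS⟩)
        (by rw [Finset.card_insert_of_notMem hzA, hA4])
      have h5' : LinearIndependent (ZMod 2)
          (fun b : ↥(insert z (A : Set (V2 7))) => (b : V2 7)) := by
        rw [← Finset.coe_insert]; exact h5
      exact ((linearIndepOn_id_insert (fun h => hzA (Finset.mem_coe.mp h))).mp h5').2 hw
    · rw [one_smul] at hzw
      have hwH : w ∈ H := span_le.mpr hAH hw
      have hzH : z ∉ H := by
        intro hzH
        apply hxH
        have hx' : x = z + w := by rw [hzw, add_assoc, stmt16_char2, add_zero]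
        rw [hx']; exact H.add_mem hzH hwH
      have hzx : z ≠ x := fun h => hzT (by rw [h]; exact Set.mem_insert x _)
      refine ⟨x + z, ?_, ?_⟩
      · rw [hDdef]
        exact Finset.mem_image.mpr
          ⟨z, Finset.mem_erase.mpr ⟨hzx, hfin.mem_toFinset.mpr ⟨hzE, hzH⟩⟩, rfl⟩
      · have hxz : x + z = w := by rw [hzw, ← add_assoc, stmt16_char2, zero_add]
        rw [hxz]; exact hw
  -- pigeonhole
  have claimA' : ∀ A : Finset (V2 7), ∃ d : V2 7,
      A ∈ S.powersetCard 4 → d ∈ D ∧ d ∈ span (ZMod 2) (A : Set (V2 7)) := by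
    intro A
    by_cases hA : A ∈ S.powersetCard 4
    · obtain ⟨d, hd1, hd2⟩ := claimA A hA
      exact ⟨d, fun _ => ⟨hd1, hd2⟩⟩
    · exact ⟨0, fun h => absurd h hA⟩
  choose f hf using claimA'
  have h15 : (S.powersetCard 4).card = 15 := by
    rw [Finset.card_powersetCard, hS6]
    decide
  obtain ⟨d, hdD, hd7⟩ := Finset.exists_lt_card_fiber_of_mul_lt_card_of_maps_to
    (t := D) (n := 7) (fun A hA => (hf A hA).1) (by omega)
  obtain ⟨hdH, hdE, hd0⟩ := hDspec d hdD
  have hPfib : (S.powersetCard 4).filter (fun A : Finset (V2 7) => f A = d) ⊆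
      (S.powersetCard 4).filter (fun A : Finset (V2 7) => d ∈ span (ZMod 2) (A : Set (V2 7))) := by
    intro A hA
    rw [Finset.mem_filter] at hA ⊢
    exact ⟨hA.1, hA.2 ▸ (hf A hA.1).2⟩
  -- Claim B : the fiber set has at most 7 elements
  have hPcard : ((S.powersetCard 4).filter
      (fun A : Finset (V2 7) => d ∈ span (ZMod 2) (A : Set (V2 7)))).card ≤ 7 := by
    by_cases hdS : d ∈ span (ZMod 2) (S : Set (V2 7))
    · obtain ⟨I, hIS, hId⟩ := stmt16_subset_sum hdS
      have hIc : (∑ v ∈ S \ I, v) = d := by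
        have h1 : ∑ v ∈ S \ I, v + ∑ v ∈ I, v = ∑ v ∈ S, v := Finset.sum_sdiff hIS
        rw [hsum, hId] at h1
        have h2 : (∑ v ∈ S \ I, v + d) + d = 0 + d := by rw [h1]
        rwa [add_assoc, stmt16_char2, add_zero, zero_add] at h2
      have hsize : ∀ J ⊆ S, (∑ v ∈ J, v) = d → 2 ≤ J.card := by
        intro J hJ hJd
        by_contra hlt
        push_neg at hlt
        interval_cases hJc : J.card
        · rw [Finset.card_eq_zero] at hJc
          subst hJc
          simp at hJd
          exact hd0 hJd.symm
        · obtain ⟨v, rfl⟩ := Finset.card_eq_one.mp hJc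
          simp at hJd
          subst hJd
          exact hdE (hSE (Finset.mem_coe.mpr (hJ (Finset.mem_singleton_self v))))
      have hI2 := hsize I hIS hId
      have hIc2 := hsize _ (Finset.sdiff_subset) hIc
      have hsd := Finset.card_sdiff_of_subset hIS
      have hI4 : I.card ≤ 4 := by omega
      have huniq : ∀ J ⊆ S, (∑ v ∈ J, v) = d → I ⊆ J ∨ (S \ I) ⊆ J := by
        intro J hJ hJd
        have hz : (∑ v ∈ (J \ I) ∪ (I \ J), v) = 0 := stmt16_symmdiff (hJd.trans hId.symm)
        by_cases hKS : (J \ I) ∪ (I \ J) = S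
        · right
          intro a ha
          rw [Finset.mem_sdiff] at ha
          have ha' : a ∈ (J \ I) ∪ (I \ J) := by rw [hKS]; exact ha.1
          rcases Finset.mem_union.mp ha' with h | h
          · exact (Finset.mem_sdiff.mp h).1
          · exact absurd (Finset.mem_sdiff.mp h).1 ha.2
        · have hKsub : (J \ I) ∪ (I \ J) ⊆ S :=
            Finset.union_subset ((Finset.sdiff_subset).trans hJ)
              ((Finset.sdiff_subset).trans hIS)
          obtain ⟨u, huS, huK⟩ := Finset.exists_of_ssubset (hKsub.ssubset_of_ne hKS)
          have hKe : (J \ I) ∪ (I \ J) ⊆ S.erase u :=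
            fun a ha => Finset.mem_erase.mpr ⟨fun h => huK (h ▸ ha), hKsub ha⟩
          have hempty := stmt16_sum_indep hKe
            (hind (S.erase u) (Finset.erase_subset u S)
              (by rw [Finset.card_erase_of_mem huS, hS6])) hz
          rw [Finset.union_eq_empty] at hempty
          left
          exact Finset.sdiff_eq_empty_iff_subset.mp hempty.2
      have hPsub : (S.powersetCard 4).filter (fun A : Finset (V2 7) => d ∈ span (ZMod 2) (A : Set (V2 7)))
          ⊆ (S.powersetCard 4).filter (fun A : Finset (V2 7) => I ⊆ A)
            ∪ (S.powersetCard 4).filter (fun A : Finset (V2 7) => (S \ I) ⊆ A) := by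
        intro A hA
        rw [Finset.mem_filter] at hA
        obtain ⟨hA1, hA2⟩ := hA
        obtain ⟨J, hJA, hJd⟩ := stmt16_subset_sum hA2
        have hAS : A ⊆ S := (Finset.mem_powersetCard.mp hA1).1
        rcases huniq J (hJA.trans hAS) hJd with h | h
        · exact Finset.mem_union_left _ (Finset.mem_filter.mpr ⟨hA1, h.trans hJA⟩)
        · exact Finset.mem_union_right _ (Finset.mem_filter.mpr ⟨hA1, h.trans hJA⟩)
      have hcount := (Finset.card_le_card hPsub).trans (Finset.card_union_le _ _)
      have hq1 := stmt16_cardQ hIS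
      have hq2 := stmt16_cardQ (Finset.sdiff_subset (s := S) (t := I))
      rw [hS6] at hq1 hq2
      rw [hsd, hS6] at hq2
      rw [hsd, hS6] at hIc2
      have hk2 : 2 ≤ I.card := hI2
      rcases (by omega : I.card = 2 ∨ I.card = 3 ∨ I.card = 4) with hIk | hIk | hIk <;>
        rw [hIk] at hq1 hq2 <;> norm_num [Nat.choose] at hq1 hq2 hcount <;> omega
    · have hempty : (S.powersetCard 4).filter
          (fun A : Finset (V2 7) => d ∈ span (ZMod 2) (A : Set (V2 7))) = ∅ := by
        refine Finset.eq_empty_of_forall_notMem ?_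
        intro A hA
        rw [Finset.mem_filter] at hA
        exact hdS (span_mono (Finset.coe_subset.mpr
          (Finset.mem_powersetCard.mp hA.1).1) hA.2)
      rw [hempty]
      simp
  have := Finset.card_le_card hPfib
  omega
end
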